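/- (Best-approximation for the semilinear problem) In the abstract semilinear framework, let u be a regular solution, suppose (H1)–(H4) give the discrete inf-sup constant β₁ := α̂β̂ − (δ₁+δ₂+δ₃) > 0 for DN̂(u)|_{X_h×Y_h}, and let u_h ∈ X_h solve N_h(u_h) = 0 with e := u − u_h satisfying 4‖Γ̂‖·‖e‖_{X̂} ≤ β₁. Then, with C_qo := (4/3)·max{1/β₁, 1 + ‖DN̂(u)‖/β₁}, one has ‖u − u_h‖_{X̂} ≤ C_qo ( min_{v_h ∈ X_h} ‖u − v_h‖_{X̂} + ‖N̂(u)‖_{Y_h*} ). In particular, if Y_h ⊂ Y (conforming test space), then ‖N̂(u)‖_{Y_h*} = 0 and the method is quasi-optimal. -/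

import Mathlib

/-!
Statement 8 (Theorem 3.6, best-approximation for the semilinear problem).
N̂(x̂) = Âx̂ − F̂ + Γ̂(x̂,x̂,·) on X̂ (tested against Ŷ) extends N; `u ∈ X` is a regular
solution; DN̂(u) restricted to X_h × Y_h satisfies the discrete inf-sup condition with
constant β₁ > 0 (operator form); `uh` is a discrete solution with 4‖Γ̂‖‖u−u_h‖ ≤ β₁.
-/

set_option maxHeartbeats 2000000
set_option synthInstance.maxHeartbeats 400000

open Metric

theorem semilinear_best_approximation
    {Xhat Yhat : Type*} [NormedAddCommGroup Xhat] [NormedSpace ℝ Xhat]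
    [NormedAddCommGroup Yhat] [NormedSpace ℝ Yhat]
    (X Xd : Submodule ℝ Xhat) (Y Yd : Submodule ℝ Yhat)
    (ahat : Xhat →L[ℝ] StrongDual ℝ Yhat) (Fhat : StrongDual ℝ Yhat)
    (Γhat : Xhat →L[ℝ] Xhat →L[ℝ] StrongDual ℝ Yhat)
    (u : ↥X)
    -- N(u) = 0 : the regular solution, tested against Y
    (hu : ∀ y : ↥Y, ahat (u : Xhat) (y : Yhat) + Γhat (u : Xhat) (u : Xhat) (y : Yhat)
      = Fhat (y : Yhat))
    -- discrete inf-sup condition for DN̂(u)|_{X_h × Y_h} with constant β₁ > 0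
    (β₁ : ℝ) (hβ₁ : 0 < β₁)
    (hdis : ∀ xh : ↥Xd, β₁ * ‖xh‖ ≤
      ‖((ahat + Γhat (u : Xhat) + Γhat.flip (u : Xhat)).bilinearComp
          Xd.subtypeL Yd.subtypeL) xh‖)
    -- the discrete solution u_h : N_h(u_h) = 0
    (uh : ↥Xd)
    (huh : ∀ yh : ↥Yd, ahat (uh : Xhat) (yh : Yhat) +
      Γhat (uh : Xhat) (uh : Xhat) (yh : Yhat) = Fhat (yh : Yhat))
    (hsmall : 4 * @norm (Xhat →L[ℝ] Xhat →L[ℝ] StrongDual ℝ Yhat)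
      (@ContinuousLinearMap.hasOpNorm ℝ ℝ Xhat (Xhat →L[ℝ] StrongDual ℝ Yhat) _ _ _ _ _ _
        (RingHom.id ℝ)) Γhat * ‖(u : Xhat) - (uh : Xhat)‖ ≤ β₁) :
    (‖(u : Xhat) - (uh : Xhat)‖ ≤
      (4 / 3) * max (1 / β₁)
          (1 + ‖ahat + Γhat (u : Xhat) + Γhat.flip (u : Xhat)‖ / β₁) *
        (infDist (u : Xhat) (Xd : Set Xhat) +
          ‖(ahat (u : Xhat) + Γhat (u : Xhat) (u : Xhat) - Fhat).comp Yd.subtypeL‖)) ∧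
    -- conforming case: if Y_h ⊂ Y then apx(𝒯) = ‖N̂(u)‖_{Y_h*} = 0
    (Yd ≤ Y →
      ‖(ahat (u : Xhat) + Γhat (u : Xhat) (u : Xhat) - Fhat).comp Yd.subtypeL‖ = 0) := by
  letI : SeminormedAddCommGroup (Xhat →L[ℝ] Xhat →L[ℝ] StrongDual ℝ Yhat) :=
    ContinuousLinearMap.toSeminormedAddCommGroup (𝕜 := ℝ) (𝕜₂ := ℝ) (σ₁₂ := RingHom.id ℝ)
      (E := Xhat) (F := Xhat →L[ℝ] StrongDual ℝ Yhat)
  set B : Xhat →L[ℝ] StrongDual ℝ Yhat :=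
    ahat + Γhat (u : Xhat) + Γhat.flip (u : Xhat) with hB
  set R : StrongDual ℝ ↥Yd :=
    (ahat (u : Xhat) + Γhat (u : Xhat) (u : Xhat) - Fhat).comp Yd.subtypeL with hR
  set e : Xhat := (u : Xhat) - (uh : Xhat) with he
  set M : ℝ := max (1 / β₁) (1 + ‖B‖ / β₁) with hM
  have hMpos : 0 < M := lt_of_lt_of_le (by positivity) (le_max_left _ _)
  -- key residual identity
  have key : ∀ yh : ↥Yd, B e (yh : Yhat) = R yh + Γhat e e (yh : Yhat) := by
    intro yh
    have h1 := huh yh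
    simp only [hB, hR, he, ContinuousLinearMap.add_apply, ContinuousLinearMap.sub_apply,
      ContinuousLinearMap.coe_comp', Function.comp_apply, Submodule.coe_subtypeL',
      Submodule.coe_subtype, ContinuousLinearMap.flip_apply, map_sub]
    ring_nf
    ring_nf at h1
    linarith
  clear_value B R e M
  constructor
  · -- main estimate
    -- Step 1: for every vh ∈ Xd, bound the error
    have main : ∀ vh : ↥Xd,
        3 / 4 * ‖e‖ ≤ M * (‖(u : Xhat) - (vh : Xhat)‖ + ‖R‖) := by
      intro vh
      set eh : ↥Xd := vh - uh with heh
      -- bound ‖Bd eh‖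
      have hb : ‖((B.bilinearComp Xd.subtypeL Yd.subtypeL) eh)‖ ≤
          ‖B‖ * ‖(u : Xhat) - (vh : Xhat)‖ + ‖R‖ + ‖Γhat‖ * ‖e‖ * ‖e‖ := by
        apply ContinuousLinearMap.opNorm_le_bound
        · positivity
        intro yh
        have hid : ((B.bilinearComp Xd.subtypeL Yd.subtypeL) eh) yh
            = B ((vh : Xhat) - (u : Xhat)) (yh : Yhat) + R yh + Γhat e e (yh : Yhat) := by
          have : (eh : Xhat) = ((vh : Xhat) - (u : Xhat)) + e := by
            simp [heh, he]
          simp only [ContinuousLinearMap.bilinearComp_apply, Submodule.coe_subtypeL',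
            Submodule.coe_subtype, this, map_add, ContinuousLinearMap.add_apply]
          rw [key yh]
          ring
        rw [hid]
        have h1 : ‖B ((vh : Xhat) - (u : Xhat)) (yh : Yhat)‖ ≤
            ‖B‖ * ‖(vh : Xhat) - (u : Xhat)‖ * ‖(yh : Yhat)‖ := B.le_opNorm₂ _ _
        have h2 : ‖R yh‖ ≤ ‖R‖ * ‖yh‖ := R.le_opNorm _
        have h3 : ‖Γhat e e (yh : Yhat)‖ ≤ ‖Γhat‖ * ‖e‖ * ‖e‖ * ‖(yh : Yhat)‖ := by
          calc ‖Γhat e e (yh : Yhat)‖ ≤ ‖Γhat e e‖ * ‖(yh : Yhat)‖ :=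
                (Γhat e e).le_opNorm _
            _ ≤ ‖Γhat‖ * ‖e‖ * ‖e‖ * ‖(yh : Yhat)‖ := by
                have := Γhat.le_opNorm₂ e e
                have hy : (0:ℝ) ≤ ‖(yh : Yhat)‖ := norm_nonneg _
                nlinarith
        have hyn : ‖(yh : Yhat)‖ = ‖yh‖ := (Submodule.coe_norm yh).symm
        rw [← hyn] at h2
        have hvn : ‖(vh : Xhat) - (u : Xhat)‖ = ‖(u : Xhat) - (vh : Xhat)‖ :=
          norm_sub_rev _ _
        calc ‖B ((vh : Xhat) - (u : Xhat)) (yh : Yhat) + R yh + Γhat e e (yh : Yhat)‖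
            ≤ ‖B ((vh : Xhat) - (u : Xhat)) (yh : Yhat)‖ + ‖R yh‖ + ‖Γhat e e (yh : Yhat)‖ :=
              norm_add₃_le
          _ ≤ (‖B‖ * ‖(u : Xhat) - (vh : Xhat)‖ + ‖R‖ + ‖Γhat‖ * ‖e‖ * ‖e‖) * ‖yh‖ := by
              rw [← hyn, ← hvn]; ring_nf; ring_nf at h1 h2 h3; linarith
      have hinf := hdis eh
      have hehn : ‖eh‖ = ‖(vh : Xhat) - (uh : Xhat)‖ := by
        rw [Submodule.coe_norm, heh]; norm_cast
      -- triangle inequality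
      have htri : ‖e‖ ≤ ‖(u : Xhat) - (vh : Xhat)‖ + ‖(vh : Xhat) - (uh : Xhat)‖ := by
        rw [he]; exact norm_sub_le_norm_sub_add_norm_sub _ _ _
      -- smallness
      have hsq : ‖Γhat‖ * ‖e‖ * ‖e‖ ≤ β₁ / 4 * ‖e‖ := by
        have := norm_nonneg e
        nlinarith
      -- combine
      have hM1 : 1 / β₁ ≤ M := hM ▸ le_max_left _ _
      have hM2 : 1 + ‖B‖ / β₁ ≤ M := hM ▸ le_max_right _ _
      have hRn : (0:ℝ) ≤ ‖R‖ := R.opNorm_nonneg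
      have hvn : (0:ℝ) ≤ ‖(u : Xhat) - (vh : Xhat)‖ := norm_nonneg _
      have hBn : (0:ℝ) ≤ ‖B‖ := B.opNorm_nonneg
      -- β₁ * ‖eh‖ ≤ ‖B‖‖u-vh‖ + ‖R‖ + β₁/4 ‖e‖
      have h5 : β₁ * ‖(vh : Xhat) - (uh : Xhat)‖ ≤
          ‖B‖ * ‖(u : Xhat) - (vh : Xhat)‖ + ‖R‖ + β₁ / 4 * ‖e‖ := by
        rw [← hehn]; linarith [le_trans hinf hb]
      clear hinf hb hdis key huh hu
      -- ‖e‖ ≤ ‖u-vh‖ + (1/β₁)(...)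
      have h6 : β₁ * ‖e‖ ≤ β₁ * ‖(u : Xhat) - (vh : Xhat)‖ +
          (‖B‖ * ‖(u : Xhat) - (vh : Xhat)‖ + ‖R‖ + β₁ / 4 * ‖e‖) := by
        nlinarith
      have h7 : 3 / 4 * ‖e‖ ≤ (1 + ‖B‖ / β₁) * ‖(u : Xhat) - (vh : Xhat)‖ + 1 / β₁ * ‖R‖ := by
        have h8 : β₁ * (3 / 4 * ‖e‖) ≤
            β₁ * ((1 + ‖B‖ / β₁) * ‖(u : Xhat) - (vh : Xhat)‖ + 1 / β₁ * ‖R‖) := by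
          have hβ' : β₁ ≠ 0 := ne_of_gt hβ₁
          have hrw : β₁ * ((1 + ‖B‖ / β₁) * ‖(u : Xhat) - (vh : Xhat)‖ + 1 / β₁ * ‖R‖)
              = (β₁ + ‖B‖) * ‖(u : Xhat) - (vh : Xhat)‖ + ‖R‖ := by
            field_simp
            try ring
          rw [hrw]; nlinarith [h5, htri, mul_le_mul_of_nonneg_left htri (le_of_lt hβ₁)]
        exact (mul_le_mul_iff_right₀ hβ₁).mp h8
      calc 3 / 4 * ‖e‖ ≤ (1 + ‖B‖ / β₁) * ‖(u : Xhat) - (vh : Xhat)‖ + 1 / β₁ * ‖R‖ := h7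
        _ ≤ M * ‖(u : Xhat) - (vh : Xhat)‖ + M * ‖R‖ := by
            linarith [mul_le_mul_of_nonneg_right hM2 hvn, mul_le_mul_of_nonneg_right hM1 hRn]
        _ = M * (‖(u : Xhat) - (vh : Xhat)‖ + ‖R‖) := by ring
    -- Step 2: pass to the infimum
    have hne : ((Xd : Set Xhat)).Nonempty := ⟨0, Xd.zero_mem⟩
    have hled : 3 / 4 * ‖e‖ / M - ‖R‖ ≤ infDist (u : Xhat) (Xd : Set Xhat) := by
      by_contra hcon
      push_neg at hcon
      obtain ⟨z, hz, hd⟩ := (infDist_lt_iff hne).mp hcon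
      have hmz := main ⟨z, hz⟩
      have hz' : (((⟨z, hz⟩ : ↥Xd)) : Xhat) = z := rfl
      rw [hz'] at hmz
      rw [dist_eq_norm, div_sub' (ne_of_gt hMpos), lt_div_iff₀ hMpos] at hd
      nlinarith [hmz, hd]
    have hid : (0:ℝ) ≤ infDist (u : Xhat) (Xd : Set Xhat) := infDist_nonneg
    have : 3 / 4 * ‖e‖ ≤ M * (infDist (u : Xhat) (Xd : Set Xhat) + ‖R‖) := by
      have h := hled
      rw [div_sub' (ne_of_gt hMpos), div_le_iff₀ hMpos] at h
      nlinarith [h]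
    calc ‖e‖ = 4 / 3 * (3 / 4 * ‖e‖) := by ring
      _ ≤ 4 / 3 * (M * (infDist (u : Xhat) (Xd : Set Xhat) + ‖R‖)) := by linarith
      _ = 4 / 3 * M * (infDist (u : Xhat) (Xd : Set Xhat) + ‖R‖) := by ring
  · -- conforming case
    intro hle
    have : R = 0 := by
      ext yh
      have h0 : ahat (u : Xhat) (yh : Yhat) + Γhat (u : Xhat) (u : Xhat) (yh : Yhat)
          = Fhat (yh : Yhat) := hu ⟨(yh : Yhat), hle yh.2⟩
      simp only [hR, ContinuousLinearMap.coe_comp', Function.comp_apply,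
        Submodule.coe_subtypeL', Submodule.coe_subtype, ContinuousLinearMap.sub_apply,
        ContinuousLinearMap.add_apply, ContinuousLinearMap.zero_apply]
      linarith
    rw [this]
    exact norm_zero (E := StrongDual ℝ ↥Yd)
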